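/- Suppose there is a sequence a_n > 0 such that for every λ > 0, a_n·(1 - G_n(λ)) converges to some finite limit ψ(λ). Then there exists a finite measure μ on [0,1] such that ψ(λ) = ∫_{[0,1]} [λ]_x μ(dx) for every λ > 0, and the measures a_n (1-x) p*_n(dx) converge weakly to μ on [0,1]. Moreover, μ is uniquely determined by ψ. -/

import Mathlib

open MeasureTheory Filter

/-- The function `[λ]_x = (1 - x^λ)/(1 - x)` for `x ∈ [0,1)`, with `[λ]_1 = λ`. -/
noncomputable def lamBr (lam x : ℝ) : ℝ := if x = 1 then lam else (1 - x ^ lam) / (1 - x)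

open Set Topology
open scoped ENNReal NNReal

namespace Stmt6Aux

noncomputable def S (p : ℕ → ℕ → ℝ) (a : ℕ → ℝ) (n : ℕ) (f : ℝ → ℝ) : ℝ :=
  a n * ∑ k ∈ Finset.range (n+1), p n k * (1 - (k:ℝ)/n) * f ((k:ℝ)/n)

variable {p : ℕ → ℕ → ℝ} {a : ℕ → ℝ}

lemma pts_mem {n k : ℕ} (hk : k ∈ Finset.range (n+1)) : (k:ℝ)/n ∈ Icc (0:ℝ) 1 := by
  rcases Nat.eq_zero_or_pos n with h0 | hpos
  · have hk0 : k = 0 := by have := Finset.mem_range.mp hk; omega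
    subst hk0; subst h0; simp
  · have hk' : (k:ℝ) ≤ n := by exact_mod_cast Nat.lt_succ_iff.mp (Finset.mem_range.mp hk)
    have hn : (0:ℝ) < n := by exact_mod_cast hpos
    exact ⟨div_nonneg (Nat.cast_nonneg k) hn.le, (div_le_one hn).mpr hk'⟩

lemma S_mono (hp : ∀ n k, 0 ≤ p n k) (ha : ∀ n, 0 < a n) {f g : ℝ → ℝ}
    (hfg : ∀ x ∈ Icc (0:ℝ) 1, f x ≤ g x) (n : ℕ) : S p a n f ≤ S p a n g := by
  unfold S
  apply mul_le_mul_of_nonneg_left _ (ha n).le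
  apply Finset.sum_le_sum
  intro k hk
  have hx := pts_mem hk
  have h1 : (0:ℝ) ≤ 1 - (k:ℝ)/n := by linarith [hx.2]
  exact mul_le_mul_of_nonneg_left (hfg _ hx) (mul_nonneg (hp n k) h1)

lemma S_congr {f g : ℝ → ℝ} (hfg : ∀ x ∈ Icc (0:ℝ) 1, f x = g x) (n : ℕ) :
    S p a n f = S p a n g := by
  unfold S
  congr 1
  apply Finset.sum_congr rfl
  intro k hk
  rw [hfg _ (pts_mem hk)]

lemma S_add (f g : ℝ → ℝ) (n : ℕ) :
    S p a n (fun x => f x + g x) = S p a n f + S p a n g := by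
  unfold S
  rw [← mul_add, ← Finset.sum_add_distrib]
  congr 1
  apply Finset.sum_congr rfl
  intro k _
  ring

lemma S_smul (c : ℝ) (f : ℝ → ℝ) (n : ℕ) :
    S p a n (fun x => c * f x) = c * S p a n f := by
  unfold S
  rw [Finset.mul_sum, Finset.mul_sum, Finset.mul_sum]
  apply Finset.sum_congr rfl
  intro k _
  ring

lemma S_sum {ι : Type*} (t : Finset ι) (g : ι → ℝ → ℝ) (n : ℕ) :
    S p a n (fun x => ∑ i ∈ t, g i x) = ∑ i ∈ t, S p a n (g i) := by
  classical
  induction t using Finset.induction with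
  | empty => simp [S]
  | insert _ _ hi ih =>
      rw [Finset.sum_insert hi, ← ih, ← S_add]
      congr 1
      funext x
      rw [Finset.sum_insert hi]

lemma S_zero (n : ℕ) : S p a n (fun _ => (0:ℝ)) = 0 := by simp [S]

lemma S_nonneg (hp : ∀ n k, 0 ≤ p n k) (ha : ∀ n, 0 < a n) {f : ℝ → ℝ}
    (hf : ∀ x ∈ Icc (0:ℝ) 1, 0 ≤ f x) (n : ℕ) : 0 ≤ S p a n f := by
  have := S_mono (p := p) (a := a) hp ha (f := fun _ => 0) (g := f) (by intro x hx; exact hf x hx) n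
  rwa [S_zero] at this

lemma S_sub (f g : ℝ → ℝ) (n : ℕ) :
    S p a n (fun x => f x - g x) = S p a n f - S p a n g := by
  have h1 := S_add (p := p) (a := a) (fun x => f x - g x) g n
  simp only [sub_add_cancel] at h1
  linarith

lemma S_abs_le (hp : ∀ n k, 0 ≤ p n k) (ha : ∀ n, 0 < a n) {f : ℝ → ℝ} {M : ℝ}
    (hf : ∀ x ∈ Icc (0:ℝ) 1, |f x| ≤ M) (n : ℕ) :
    |S p a n f| ≤ M * S p a n (fun _ => 1) := by
  have h1 : S p a n f ≤ M * S p a n (fun _ => 1) := by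
    rw [← S_smul]
    exact S_mono hp ha (fun x hx => (abs_le.mp (hf x hx)).2.trans (by simp)) n
  have h2 : -(M * S p a n (fun _ => 1)) ≤ S p a n f := by
    rw [← neg_mul, ← S_smul]
    exact S_mono hp ha (fun x hx => by simpa using neg_le_of_abs_le (hf x hx)) n
  exact abs_le.mpr ⟨by linarith, h1⟩


lemma S_lamBr (hsum : ∀ n, ∑ k ∈ Finset.range (n+1), p n k = 1) (lam : ℝ) (n : ℕ) :
    S p a n (lamBr lam) = a n * (1 - ∑ k ∈ Finset.range (n+1), ((k:ℝ)/n) ^ lam * p n k) := by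
  unfold S
  congr 1
  have h : ∀ k ∈ Finset.range (n+1), p n k * (1 - (k:ℝ)/n) * lamBr lam ((k:ℝ)/n)
      = p n k - ((k:ℝ)/n)^lam * p n k := by
    intro k _
    by_cases h : ((k:ℝ)/n) = 1
    · rw [h]; simp [lamBr, Real.one_rpow]
    · rw [lamBr, if_neg h]
      have h1 : (1:ℝ) - (k:ℝ)/n ≠ 0 := sub_ne_zero.mpr (Ne.symm h)
      field_simp
  rw [Finset.sum_congr rfl h, Finset.sum_sub_distrib, hsum n]

lemma S_pow (j n : ℕ) : S p a n (fun x => x ^ j) =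
    (a n * (1 - ∑ k ∈ Finset.range (n+1), ((k:ℝ)/n) ^ ((j+1 : ℕ):ℝ) * p n k))
    - (a n * (1 - ∑ k ∈ Finset.range (n+1), ((k:ℝ)/n) ^ ((j : ℕ):ℝ) * p n k)) := by
  unfold S
  rw [← mul_sub]
  congr 1
  have : ∀ k ∈ Finset.range (n+1), p n k * (1 - (k:ℝ)/n) * ((k:ℝ)/n) ^ j
      = ((k:ℝ)/n) ^ ((j:ℕ):ℝ) * p n k - ((k:ℝ)/n) ^ ((j+1 : ℕ):ℝ) * p n k := by
    intro k _
    rw [Real.rpow_natCast, Real.rpow_natCast, pow_succ]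
    ring
  rw [Finset.sum_congr rfl this, Finset.sum_sub_distrib]
  ring

variable {ψ : ℝ → ℝ}

/-- limit of the `j`-th moment. -/
noncomputable def mlim (ψ : ℝ → ℝ) (j : ℕ) : ℝ :=
  ψ ((j:ℝ)+1) - (if j = 0 then 0 else ψ j)

lemma tendsto_T (hsum : ∀ n, ∑ k ∈ Finset.range (n+1), p n k = 1)
    (hconv : ∀ lam > (0:ℝ),
      Tendsto (fun n => a n * (1 - ∑ k ∈ Finset.range (n+1), ((k:ℝ)/n) ^ lam * p n k))
        atTop (nhds (ψ lam))) (j : ℕ) :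
    Tendsto (fun n => a n * (1 - ∑ k ∈ Finset.range (n+1), ((k:ℝ)/n) ^ ((j:ℕ):ℝ) * p n k))
      atTop (nhds (if j = 0 then 0 else ψ j)) := by
  rcases Nat.eq_zero_or_pos j with h0 | hpos
  · subst h0
    simp only [if_pos rfl, Nat.cast_zero, Real.rpow_zero, one_mul]
    have : ∀ n, a n * (1 - ∑ k ∈ Finset.range (n+1), p n k) = 0 := by
      intro n; rw [hsum n]; ring
    simp only [this]
    exact tendsto_const_nhds
  · rw [if_neg (by omega)]
    exact hconv _ (by exact_mod_cast hpos)

lemma tendsto_S_pow (hsum : ∀ n, ∑ k ∈ Finset.range (n+1), p n k = 1)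
    (hconv : ∀ lam > (0:ℝ),
      Tendsto (fun n => a n * (1 - ∑ k ∈ Finset.range (n+1), ((k:ℝ)/n) ^ lam * p n k))
        atTop (nhds (ψ lam))) (j : ℕ) :
    Tendsto (fun n => S p a n (fun x => x ^ j)) atTop (nhds (mlim ψ j)) := by
  have h1 := tendsto_T hsum hconv (j+1)
  have h2 := tendsto_T hsum hconv j
  rw [if_neg (by omega)] at h1
  have : mlim ψ j = ψ ((j+1 : ℕ):ℝ) - (if j = 0 then 0 else ψ j) := by
    rw [mlim]; norm_num
  rw [this]
  simp only [S_pow]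
  exact h1.sub h2

lemma tendsto_S_poly (hsum : ∀ n, ∑ k ∈ Finset.range (n+1), p n k = 1)
    (hconv : ∀ lam > (0:ℝ),
      Tendsto (fun n => a n * (1 - ∑ k ∈ Finset.range (n+1), ((k:ℝ)/n) ^ lam * p n k))
        atTop (nhds (ψ lam))) (Q : Polynomial ℝ) :
    Tendsto (fun n => S p a n (fun x => Q.eval x)) atTop
      (nhds (∑ i ∈ Finset.range (Q.natDegree + 1), Q.coeff i * mlim ψ i)) := by
  have hev : (fun x => Q.eval x) =
      fun x => ∑ i ∈ Finset.range (Q.natDegree + 1), Q.coeff i * x ^ i := by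
    funext x; exact Polynomial.eval_eq_sum_range x
  rw [hev]
  simp only [S_sum, S_smul]
  exact tendsto_finset_sum _ (fun i _ => ((tendsto_S_pow hsum hconv i).const_mul _))

lemma exists_bound (hsum : ∀ n, ∑ k ∈ Finset.range (n+1), p n k = 1)
    (hconv : ∀ lam > (0:ℝ),
      Tendsto (fun n => a n * (1 - ∑ k ∈ Finset.range (n+1), ((k:ℝ)/n) ^ lam * p n k))
        atTop (nhds (ψ lam))) :
    ∃ C : ℝ, 0 ≤ C ∧ ∀ n, S p a n (fun _ => (1:ℝ)) ≤ C := by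
  have h := tendsto_S_pow (ψ := ψ) hsum hconv 0
  simp only [pow_zero] at h
  obtain ⟨C, hC⟩ := h.bddAbove_range
  exact ⟨max C 0, le_max_right _ _, fun n => le_trans (hC ⟨n, rfl⟩) (le_max_left _ _)⟩

noncomputable def Phi (p : ℕ → ℕ → ℝ) (a : ℕ → ℝ) (f : ℝ → ℝ) : ℝ :=
  limUnder atTop (fun n => S p a n f)

lemma tendsto_S_Phi (hp : ∀ n k, 0 ≤ p n k) (ha : ∀ n, 0 < a n)
    (hsum : ∀ n, ∑ k ∈ Finset.range (n+1), p n k = 1)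
    (hconv : ∀ lam > (0:ℝ),
      Tendsto (fun n => a n * (1 - ∑ k ∈ Finset.range (n+1), ((k:ℝ)/n) ^ lam * p n k))
        atTop (nhds (ψ lam)))
    {f : ℝ → ℝ} (hf : ContinuousOn f (Icc 0 1)) :
    Tendsto (fun n => S p a n f) atTop (nhds (Phi p a f)) := by
  obtain ⟨C, hC0, hC⟩ := exists_bound (ψ := ψ) hsum hconv
  have hcau : CauchySeq (fun n => S p a n f) := by
    rw [Metric.cauchySeq_iff]
    intro ε hε
    have hC1 : (0:ℝ) < C + 1 := by linarith
    have hε4 : 0 < ε / (4 * (C+1)) := by positivity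
    obtain ⟨Q, hQ⟩ := exists_polynomial_near_of_continuousOn 0 1 f hf _ hε4
    have hQc := (tendsto_S_poly (ψ := ψ) hsum hconv Q).cauchySeq
    rw [Metric.cauchySeq_iff] at hQc
    obtain ⟨N, hN⟩ := hQc (ε/2) (by positivity)
    refine ⟨N, fun m hm n hn => ?_⟩
    have key : ∀ l, dist (S p a l f) (S p a l (fun x => Q.eval x)) ≤ ε/4 := by
      intro l
      rw [Real.dist_eq, ← S_sub]
      have hb := S_abs_le (p := p) (a := a) hp ha (f := fun x => f x - Q.eval x)
        (M := ε/(4*(C+1))) (fun x hx => by rw [abs_sub_comm]; exact (hQ x hx).le) l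
      refine hb.trans ?_
      have h1 : S p a l (fun _ => (1:ℝ)) ≤ C := hC l
      have h2 : ε/(4*(C+1)) * S p a l (fun _ => (1:ℝ)) ≤ ε/(4*(C+1)) * (C+1) :=
        mul_le_mul_of_nonneg_left (by linarith) hε4.le
      refine h2.trans (le_of_eq ?_)
      field_simp
    calc dist (S p a m f) (S p a n f)
        ≤ dist (S p a m f) (S p a m (fun x => Q.eval x))
          + dist (S p a m (fun x => Q.eval x)) (S p a n (fun x => Q.eval x))
          + dist (S p a n (fun x => Q.eval x)) (S p a n f) := dist_triangle4 _ _ _ _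
      _ < ε/4 + ε/2 + ε/4 := by
          have := hN m hm n hn
          have k1 := key m
          have k2 := key n
          rw [dist_comm] at k2
          apply add_lt_add_of_lt_of_le (add_lt_add_of_le_of_lt k1 this) k2
      _ = ε := by ring
  obtain ⟨L, hL⟩ := cauchySeq_tendsto_of_complete hcau
  rw [Phi, hL.limUnder_eq]
  exact hL

lemma Phi_congr {f g : ℝ → ℝ} (hfg : ∀ x ∈ Icc (0:ℝ) 1, f x = g x) :
    Phi p a f = Phi p a g := by
  unfold Phi
  congr 1
  funext n
  exact S_congr hfg n

noncomputable def chi (t s x : ℝ) : ℝ := max 0 (min 1 ((s - x)/(s - t)))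

lemma chi_nonneg (t s x : ℝ) : 0 ≤ chi t s x := le_max_left _ _

lemma chi_le_one (t s x : ℝ) : chi t s x ≤ 1 :=
  max_le zero_le_one (min_le_left _ _)

lemma chi_eq_one {t s x : ℝ} (hts : t < s) (hx : x ≤ t) : chi t s x = 1 := by
  have h : (1:ℝ) ≤ (s - x)/(s - t) := (le_div_iff₀ (by linarith)).mpr (by linarith)
  rw [chi, min_eq_left h, max_eq_right zero_le_one]

lemma chi_eq_zero {t s x : ℝ} (hts : t < s) (hx : s ≤ x) : chi t s x = 0 := by
  have h : (s - x)/(s - t) ≤ 0 := div_nonpos_of_nonpos_of_nonneg (by linarith) (by linarith)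
  rw [chi, max_eq_left ((min_le_right _ _).trans h)]

lemma chi_eq_mid {t s x : ℝ} (hts : t < s) (h1 : t ≤ x) (h2 : x ≤ s) :
    chi t s x = (s - x)/(s - t) := by
  have hd : (0:ℝ) < s - t := by linarith
  have ha : (s - x)/(s - t) ≤ 1 := (div_le_one hd).mpr (by linarith)
  have hb : 0 ≤ (s - x)/(s - t) := div_nonneg (by linarith) hd.le
  rw [chi, min_eq_right ha, max_eq_right hb]

lemma chi_continuous (t s : ℝ) : Continuous (chi t s) := by
  apply continuous_const.max
  apply continuous_const.min
  exact (continuous_const.sub continuous_id).div_const _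

lemma chi_mono {t s t' s' : ℝ} (htt' : t ≤ t') (hss' : s ≤ s') (hts : t < s)
    (hts' : t' < s') (x : ℝ) : chi t s x ≤ chi t' s' x := by
  rcases le_or_gt x t' with hx | hx
  · rw [chi_eq_one hts' hx]; exact chi_le_one _ _ _
  rcases le_or_gt s x with hx2 | hx2
  · rw [chi_eq_zero hts hx2]; exact chi_nonneg _ _ _
  have h1 : t ≤ x := le_trans htt' hx.le
  have h2 : x ≤ s' := le_trans hx2.le hss'
  rw [chi_eq_mid hts h1 hx2.le, chi_eq_mid hts' hx.le h2]
  rw [div_le_div_iff₀ (by linarith) (by linarith)]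
  nlinarith [mul_nonneg (sub_nonneg.mpr htt') (sub_nonneg.mpr hss'),
    mul_nonneg (sub_nonneg.mpr hx2.le) (sub_nonneg.mpr htt'),
    mul_nonneg (sub_nonneg.mpr hss') (sub_nonneg.mpr hx.le)]

lemma chi_shift {t u s x : ℝ} (htu : t ≤ u) (hus : u < s) :
    chi u s x ≤ chi t s x + (u - t)/(s - t) := by
  have hts : t < s := lt_of_le_of_lt htu hus
  have hd : (0:ℝ) < s - t := by linarith
  have hθ : 0 ≤ (u - t)/(s - t) := div_nonneg (by linarith) hd.le
  rcases le_or_gt x t with hx | hx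
  · rw [chi_eq_one hts hx]
    have := chi_le_one u s x
    linarith
  rcases le_or_gt x u with hx2 | hx2
  · rw [chi_eq_one hus hx2, chi_eq_mid hts hx.le (hx2.trans hus.le)]
    rw [← add_div, le_div_iff₀ hd]
    linarith
  rcases le_or_gt s x with hx3 | hx3
  · rw [chi_eq_zero hus hx3]
    have := chi_nonneg t s x
    linarith
  · rw [chi_eq_mid hus hx2.le hx3.le, chi_eq_mid hts hx.le hx3.le]
    rw [← add_div, div_le_div_iff₀ (by linarith) hd]
    nlinarith [mul_le_mul_of_nonneg_right (show s - x ≤ s - u by linarith) (show (0:ℝ) ≤ u - t by linarith)]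

section Fdev

variable {p : ℕ → ℕ → ℝ} {a : ℕ → ℝ} {C : ℝ}

noncomputable def Fst (Φ : (ℝ → ℝ) → ℝ) (t : ℝ) : ℝ :=
  sInf ((fun s => Φ (chi t s)) '' Ioi t)

variable {Φ : (ℝ → ℝ) → ℝ}

lemma Phi_mono' (hp : ∀ n k, 0 ≤ p n k) (ha : ∀ n, 0 < a n)
    (hT : ∀ f : ℝ → ℝ, ContinuousOn f (Icc 0 1) →
      Tendsto (fun n => S p a n f) atTop (nhds (Φ f)))
    {f g : ℝ → ℝ} (hf : ContinuousOn f (Icc 0 1))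
    (hg : ContinuousOn g (Icc 0 1)) (hfg : ∀ x ∈ Icc (0:ℝ) 1, f x ≤ g x) :
    Φ f ≤ Φ g :=
  le_of_tendsto_of_tendsto' (hT f hf) (hT g hg) (fun n => S_mono hp ha hfg n)

lemma Phi_chi_nonneg (hp : ∀ n k, 0 ≤ p n k) (ha : ∀ n, 0 < a n)
    (hT : ∀ f : ℝ → ℝ, ContinuousOn f (Icc 0 1) →
      Tendsto (fun n => S p a n f) atTop (nhds (Φ f)))
    {t s : ℝ} (_ : t < s) : 0 ≤ Φ (chi t s) :=
  ge_of_tendsto' (hT _ (chi_continuous t s).continuousOn)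
    (fun n => S_nonneg hp ha (fun x _ => chi_nonneg t s x) n)

lemma Fchi_bddBelow (hp : ∀ n k, 0 ≤ p n k) (ha : ∀ n, 0 < a n)
    (hT : ∀ f : ℝ → ℝ, ContinuousOn f (Icc 0 1) →
      Tendsto (fun n => S p a n f) atTop (nhds (Φ f)))
    (t : ℝ) : BddBelow ((fun s => Φ (chi t s)) '' Ioi t) := by
  refine ⟨0, fun b hb => ?_⟩
  obtain ⟨s, hs, rfl⟩ := hb
  exact Phi_chi_nonneg hp ha hT hs

lemma Fchi_nonempty (Φ : (ℝ → ℝ) → ℝ) (t : ℝ) :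
    ((fun s => Φ (chi t s)) '' Ioi t).Nonempty :=
  ⟨_, ⟨t+1, by simp, rfl⟩⟩

lemma Fst_le_Phi (hp : ∀ n k, 0 ≤ p n k) (ha : ∀ n, 0 < a n)
    (hT : ∀ f : ℝ → ℝ, ContinuousOn f (Icc 0 1) →
      Tendsto (fun n => S p a n f) atTop (nhds (Φ f)))
    {t s : ℝ} (hs : t < s) : Fst Φ t ≤ Φ (chi t s) :=
  csInf_le (Fchi_bddBelow hp ha hT t) ⟨s, hs, rfl⟩

lemma Phi_le_Fst (hp : ∀ n k, 0 ≤ p n k) (ha : ∀ n, 0 < a n)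
    (hT : ∀ f : ℝ → ℝ, ContinuousOn f (Icc 0 1) →
      Tendsto (fun n => S p a n f) atTop (nhds (Φ f)))
    {t s : ℝ} (hs : t < s) : Φ (chi t s) ≤ Fst Φ s := by
  apply le_csInf (Fchi_nonempty Φ s)
  rintro b ⟨s', hs', rfl⟩
  exact Phi_mono' hp ha hT (chi_continuous t s).continuousOn
    (chi_continuous s s').continuousOn (fun x _ => chi_mono hs.le (le_of_lt hs') hs hs' x)

lemma Fst_nonneg (hp : ∀ n k, 0 ≤ p n k) (ha : ∀ n, 0 < a n)
    (hT : ∀ f : ℝ → ℝ, ContinuousOn f (Icc 0 1) →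
      Tendsto (fun n => S p a n f) atTop (nhds (Φ f)))
    (t : ℝ) : 0 ≤ Fst Φ t := by
  apply le_csInf (Fchi_nonempty Φ t)
  rintro b ⟨s, hs, rfl⟩
  exact Phi_chi_nonneg hp ha hT hs

lemma Fst_mono (hp : ∀ n k, 0 ≤ p n k) (ha : ∀ n, 0 < a n)
    (hT : ∀ f : ℝ → ℝ, ContinuousOn f (Icc 0 1) →
      Tendsto (fun n => S p a n f) atTop (nhds (Φ f))) :
    Monotone (Fst Φ) := by
  intro t₁ t₂ h
  apply le_csInf (Fchi_nonempty Φ t₂)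
  rintro b ⟨s, hs, rfl⟩
  refine (Fst_le_Phi hp ha hT (lt_of_le_of_lt h hs)).trans ?_
  exact Phi_mono' hp ha hT (chi_continuous _ _).continuousOn
    (chi_continuous _ _).continuousOn (fun x _ => chi_mono h le_rfl (lt_of_le_of_lt h hs) hs x)

lemma Phi_one_le
    (hT : ∀ f : ℝ → ℝ, ContinuousOn f (Icc 0 1) →
      Tendsto (fun n => S p a n f) atTop (nhds (Φ f)))
    (hC : ∀ n, S p a n (fun _ => (1:ℝ)) ≤ C) : Φ (fun _ => (1:ℝ)) ≤ C :=
  le_of_tendsto' (hT _ continuousOn_const) hC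

lemma Phi_chi_le_one (hp : ∀ n k, 0 ≤ p n k) (ha : ∀ n, 0 < a n)
    (hT : ∀ f : ℝ → ℝ, ContinuousOn f (Icc 0 1) →
      Tendsto (fun n => S p a n f) atTop (nhds (Φ f)))
    {t s : ℝ} (_ : t < s) : Φ (chi t s) ≤ Φ (fun _ => (1:ℝ)) :=
  Phi_mono' hp ha hT (chi_continuous t s).continuousOn continuousOn_const
    (fun x _ => chi_le_one t s x)

lemma Fst_eq_zero (hp : ∀ n k, 0 ≤ p n k) (ha : ∀ n, 0 < a n)
    (hT : ∀ f : ℝ → ℝ, ContinuousOn f (Icc 0 1) →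
      Tendsto (fun n => S p a n f) atTop (nhds (Φ f)))
    {t : ℝ} (ht : t < 0) : Fst Φ t = 0 := by
  have hs : t < t/2 := by linarith
  have h1 : Φ (chi t (t/2)) = 0 := by
    have h2 : ∀ n, S p a n (chi t (t/2)) = 0 := by
      intro n
      rw [S_congr (g := fun _ => (0:ℝ)) (fun x hx => chi_eq_zero hs (by linarith [hx.1])), S_zero]
    have h3 := hT _ (chi_continuous t (t/2)).continuousOn
    simp only [h2] at h3
    exact tendsto_nhds_unique h3 tendsto_const_nhds
  refine le_antisymm ?_ (Fst_nonneg hp ha hT t)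
  rw [← h1]
  exact Fst_le_Phi hp ha hT hs

lemma Fst_eq_c (hp : ∀ n k, 0 ≤ p n k) (ha : ∀ n, 0 < a n)
    (hT : ∀ f : ℝ → ℝ, ContinuousOn f (Icc 0 1) →
      Tendsto (fun n => S p a n f) atTop (nhds (Φ f)))
    {t : ℝ} (ht : 1 ≤ t) : Fst Φ t = Φ (fun _ => (1:ℝ)) := by
  have key : ∀ s ∈ Ioi t, Φ (chi t s) = Φ (fun _ => (1:ℝ)) := by
    intro s hs
    have h2 : ∀ n, S p a n (chi t s) = S p a n (fun _ => (1:ℝ)) :=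
      fun n => S_congr (fun x hx => chi_eq_one hs (le_trans hx.2 ht)) n
    have h3 := hT _ (chi_continuous t s).continuousOn
    simp only [h2] at h3
    exact tendsto_nhds_unique h3 (hT _ continuousOn_const)
  apply le_antisymm
  · rw [← key (t+1) (by simp)]
    exact Fst_le_Phi hp ha hT (by simp)
  · apply le_csInf (Fchi_nonempty Φ t)
    rintro b ⟨s, hs, rfl⟩
    simpa using (key s hs).ge

lemma Fst_shift (hp : ∀ n k, 0 ≤ p n k) (ha : ∀ n, 0 < a n)
    (hT : ∀ f : ℝ → ℝ, ContinuousOn f (Icc 0 1) →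
      Tendsto (fun n => S p a n f) atTop (nhds (Φ f)))
    (hC : ∀ n, S p a n (fun _ => (1:ℝ)) ≤ C)
    {t u s : ℝ} (htu : t ≤ u) (hus : u < s) :
    Fst Φ u ≤ Φ (chi t s) + C * ((u - t)/(s - t)) := by
  have hts : t < s := lt_of_le_of_lt htu hus
  have hθ : 0 ≤ (u - t)/(s - t) := div_nonneg (by linarith) (by linarith)
  refine (Fst_le_Phi hp ha hT hus).trans ?_
  refine le_of_tendsto_of_tendsto' (hT _ (chi_continuous u s).continuousOn)
    (((hT _ (chi_continuous t s).continuousOn)).add_const (C * ((u - t)/(s - t))))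
    (fun n => ?_)
  have h1 : S p a n (chi u s) ≤ S p a n (fun x => chi t s x + (u - t)/(s - t)) :=
    S_mono hp ha (fun x _ => chi_shift htu hus) n
  rw [S_add] at h1
  have h2 : S p a n (fun _ => (u - t)/(s - t)) = (u - t)/(s - t) * S p a n (fun _ => (1:ℝ)) := by
    rw [← S_smul]
    congr 1
    funext x
    ring
  rw [h2] at h1
  have h3 : (u - t)/(s - t) * S p a n (fun _ => (1:ℝ)) ≤ (u - t)/(s - t) * C :=
    mul_le_mul_of_nonneg_left (hC n) hθ
  calc S p a n (chi u s) ≤ S p a n (chi t s) + (u - t)/(s - t) * S p a n (fun _ => (1:ℝ)) := h1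
    _ ≤ S p a n (chi t s) + C * ((u - t)/(s - t)) := by rw [mul_comm C]; linarith

lemma Fst_rightcont (hp : ∀ n k, 0 ≤ p n k) (ha : ∀ n, 0 < a n)
    (hT : ∀ f : ℝ → ℝ, ContinuousOn f (Icc 0 1) →
      Tendsto (fun n => S p a n f) atTop (nhds (Φ f)))
    (hC0 : 0 ≤ C) (hC : ∀ n, S p a n (fun _ => (1:ℝ)) ≤ C)
    (t : ℝ) : sInf (Fst Φ '' Ioi t) = Fst Φ t := by
  apply le_antisymm
  · have key : ∀ s ∈ Ioi t, sInf (Fst Φ '' Ioi t) ≤ Φ (chi t s) := by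
      intro s hs
      apply le_of_forall_pos_le_add
      intro ε hε
      have hC1 : (0:ℝ) < C + 1 := by linarith
      set u := t + (s - t) * min (1/2) (ε/(C+1)) with hu
      have hmin : 0 < min (1/2) (ε/(C+1)) := lt_min (by norm_num) (by positivity)
      have hst : (0:ℝ) < s - t := by simp only [mem_Ioi] at hs; linarith
      have htu : t < u := by
        rw [hu]
        nlinarith
      have hus : u < s := by
        rw [hu]
        have h5 : (s - t) * min (1/2) (ε/(C+1)) ≤ (s - t) * (1/2) :=
          mul_le_mul_of_nonneg_left (min_le_left _ _) hst.le
        nlinarith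
      have h1 : sInf (Fst Φ '' Ioi t) ≤ Fst Φ u := csInf_le
        (by
          refine ⟨0, fun b hb => ?_⟩
          obtain ⟨v, hv, rfl⟩ := hb
          exact Fst_nonneg hp ha hT v) ⟨u, htu, rfl⟩
      refine h1.trans ((Fst_shift hp ha hT hC htu.le hus).trans ?_)
      have h2 : (u - t)/(s - t) = min (1/2) (ε/(C+1)) := by
        rw [hu]
        field_simp
        ring
      rw [h2]
      have h3 : C * min (1/2) (ε/(C+1)) ≤ C * (ε/(C+1)) :=
        mul_le_mul_of_nonneg_left (min_le_right _ _) hC0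
      have h4 : C * (ε/(C+1)) ≤ ε := by
        rw [mul_div_assoc']
        rw [div_le_iff₀ hC1]
        nlinarith
      linarith
    apply le_csInf (Fchi_nonempty Φ t)
    rintro b ⟨s, hs, rfl⟩
    exact key s hs
  · apply le_csInf (Set.Nonempty.image _ ⟨t+1, by simp⟩)
    rintro b ⟨u, hu, rfl⟩
    exact Fst_mono hp ha hT (le_of_lt hu)

end Fdev

section Meas

variable {p : ℕ → ℕ → ℝ} {a : ℕ → ℝ} {C : ℝ} {Φ : (ℝ → ℝ) → ℝ}

noncomputable def FS (hp : ∀ n k, 0 ≤ p n k) (ha : ∀ n, 0 < a n)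
    (hT : ∀ f : ℝ → ℝ, ContinuousOn f (Icc 0 1) →
      Tendsto (fun n => S p a n f) atTop (nhds (Φ f)))
    (hC0 : 0 ≤ C) (hC : ∀ n, S p a n (fun _ => (1:ℝ)) ≤ C) : StieltjesFunction ℝ where
  toFun := Fst Φ
  mono' := Fst_mono hp ha hT
  right_continuous' := by
    intro x
    rw [← continuousWithinAt_Ioi_iff_Ici]
    have h := (Fst_mono hp ha hT).tendsto_nhdsGT x
    rw [Set.image_eq_range] at h
    have h2 : sInf (range fun (y : Ioi x) => Fst Φ y) = Fst Φ x := by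
      rw [← Set.image_eq_range]
      exact Fst_rightcont hp ha hT hC0 hC x
    rw [h2] at h
    exact h

variable (hp : ∀ n k, 0 ≤ p n k) (ha : ∀ n, 0 < a n)
    (hT : ∀ f : ℝ → ℝ, ContinuousOn f (Icc 0 1) →
      Tendsto (fun n => S p a n f) atTop (nhds (Φ f)))
    (hC0 : 0 ≤ C) (hC : ∀ n, S p a n (fun _ => (1:ℝ)) ≤ C)

lemma FS_apply (t : ℝ) : FS hp ha hT hC0 hC t = Fst Φ t := rfl

lemma FS_tendsto_atBot : Tendsto (FS hp ha hT hC0 hC : ℝ → ℝ) atBot (nhds 0) := by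
  apply Tendsto.congr' (f₁ := fun _ => (0:ℝ))
  · filter_upwards [Iio_mem_atBot (0:ℝ)] with t ht
    exact (Fst_eq_zero hp ha hT ht).symm
  · exact tendsto_const_nhds

lemma FS_tendsto_atTop :
    Tendsto (FS hp ha hT hC0 hC : ℝ → ℝ) atTop (nhds (Φ (fun _ => (1:ℝ)))) := by
  apply Tendsto.congr' (f₁ := fun _ => Φ (fun _ => (1:ℝ)))
  · filter_upwards [Ici_mem_atTop (1:ℝ)] with t ht
    exact (Fst_eq_c hp ha hT ht).symm
  · exact tendsto_const_nhds

lemma FS_measure_univ :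
    (FS hp ha hT hC0 hC).measure univ = ENNReal.ofReal (Φ (fun _ => (1:ℝ))) := by
  rw [(FS hp ha hT hC0 hC).measure_univ
    (FS_tendsto_atBot hp ha hT hC0 hC) (FS_tendsto_atTop hp ha hT hC0 hC), sub_zero]

lemma FS_measure_fin : (FS hp ha hT hC0 hC).measure univ < ⊤ := by
  rw [FS_measure_univ]
  exact ENNReal.ofReal_lt_top

lemma FS_leftLim_zero : Function.leftLim (FS hp ha hT hC0 hC : ℝ → ℝ) 0 = 0 := by
  apply leftLim_eq_of_tendsto
  apply Tendsto.congr' (f₁ := fun _ => (0:ℝ))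
  · filter_upwards [self_mem_nhdsWithin] with t ht
    exact (Fst_eq_zero hp ha hT ht).symm
  · exact tendsto_const_nhds

lemma FS_measure_Icc :
    (FS hp ha hT hC0 hC).measure (Icc 0 1) = ENNReal.ofReal (Φ (fun _ => (1:ℝ))) := by
  rw [StieltjesFunction.measure_Icc, FS_leftLim_zero hp ha hT hC0 hC, sub_zero]
  congr 1
  exact Fst_eq_c hp ha hT le_rfl

lemma FS_measure_compl : (FS hp ha hT hC0 hC).measure (Icc (0:ℝ) 1)ᶜ = 0 := by
  have hfin : (FS hp ha hT hC0 hC).measure (Icc (0:ℝ) 1) ≠ ⊤ := by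
    rw [FS_measure_Icc hp ha hT hC0 hC]; exact ENNReal.ofReal_ne_top
  rw [measure_compl measurableSet_Icc hfin, FS_measure_univ hp ha hT hC0 hC,
    FS_measure_Icc hp ha hT hC0 hC, tsub_self]

end Meas

lemma Ioc_biUnion (u : ℕ → ℝ) (hu : ∀ i, u i ≤ u (i+1)) (m : ℕ) :
    ⋃ j ∈ Finset.range m, Ioc (u j) (u (j+1)) = Ioc (u 0) (u m) := by
  induction m with
  | zero => simp
  | succ m ih =>
      rw [Finset.range_add_one, Finset.set_biUnion_insert, ih, Set.union_comm,
        Set.Ioc_union_Ioc_eq_Ioc (monotone_nat_of_le_succ hu (Nat.zero_le m)) (hu m)]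

section Core

variable {p : ℕ → ℕ → ℝ} {a : ℕ → ℝ} {C : ℝ} {Φ : (ℝ → ℝ) → ℝ}
variable (hp : ∀ n k, 0 ≤ p n k) (ha : ∀ n, 0 < a n)
    (hT : ∀ f : ℝ → ℝ, ContinuousOn f (Icc 0 1) →
      Tendsto (fun n => S p a n f) atTop (nhds (Φ f)))
    (hC0 : 0 ≤ C) (hC : ∀ n, S p a n (fun _ => (1:ℝ)) ≤ C)

lemma Phi_eq_integral {g : ℝ → ℝ} (hg : Continuous g)
    {M : ℝ} (hM0 : 0 ≤ M) (hM : ∀ x, |g x| ≤ M) :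
    Φ g = ∫ x, g x ∂(FS hp ha hT hC0 hC).measure := by
  set μ := (FS hp ha hT hC0 hC).measure with hμdef
  haveI : IsFiniteMeasure μ := ⟨FS_measure_fin hp ha hT hC0 hC⟩
  have hgm : AEStronglyMeasurable g μ := hg.aestronglyMeasurable
  have hgint : Integrable g μ :=
    (integrable_const M).mono' hgm (Eventually.of_forall fun x => by simpa using hM x)
  have hc0 : 0 ≤ Φ (fun _ => (1:ℝ)) :=
    ge_of_tendsto' (hT _ continuousOn_const)
      (fun n => S_nonneg hp ha (fun x _ => zero_le_one) n)
  have hcC : Φ (fun _ => (1:ℝ)) ≤ C := Phi_one_le hT hC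
  suffices H : ∀ ε > 0, |Φ g - ∫ x, g x ∂μ| ≤ (2*C + 2*M + 2) * ε by
    have hK : (0:ℝ) < 2*C + 2*M + 2 := by linarith
    by_contra hne
    have hd : 0 < |Φ g - ∫ x, g x ∂μ| := abs_pos.mpr (sub_ne_zero.mpr hne)
    have hH := H (|Φ g - ∫ x, g x ∂μ| / (2 * (2*C + 2*M + 2))) (by positivity)
    have heq : (2*C + 2*M + 2) * (|Φ g - ∫ x, g x ∂μ| / (2 * (2*C + 2*M + 2)))
        = |Φ g - ∫ x, g x ∂μ| / 2 := by
      field_simp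
    rw [heq] at hH
    linarith
  intro ε hε
  obtain ⟨δ, hδ0, hδ⟩ := Metric.uniformContinuousOn_iff.mp
    (isCompact_Icc.uniformContinuousOn_of_continuous
      (hg.continuousOn : ContinuousOn g (Icc (-2:ℝ) 3))) ε hε
  set δ' := min δ 1 with hδ'def
  have hδ'0 : 0 < δ' := lt_min hδ0 one_pos
  obtain ⟨m₀, hm₀⟩ := exists_nat_gt (2/δ')
  set m := m₀ + 1 with hmdef
  have hmpos : 0 < (m:ℝ) := by positivity
  have hmgt : 2/δ' < (m:ℝ) := lt_of_lt_of_le hm₀ (by exact_mod_cast Nat.le_succ m₀)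
  set Δ := 2/(m:ℝ) with hΔdef
  have hΔ0 : 0 < Δ := by positivity
  have hΔδ : Δ < δ' := by
    rw [hΔdef, div_lt_iff₀ hmpos]
    rw [div_lt_iff₀ hδ'0] at hmgt
    linarith [hmgt]
  have hΔ1 : Δ ≤ 1 := hΔδ.le.trans (min_le_right δ 1)
  have hΔδ2 : Δ < δ := lt_of_lt_of_le hΔδ (min_le_left δ 1)
  set t : ℕ → ℝ := fun i => -1 + i * Δ with htdef
  have htstep : ∀ i : ℕ, t (i+1) = t i + Δ := by
    intro i
    simp only [htdef]
    push_cast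
    ring
  have htmono : Monotone t := monotone_nat_of_le_succ (fun i => by rw [htstep]; linarith)
  have ht0 : t 0 = -1 := by simp [htdef]
  have htm : t m = 1 := by
    rw [htdef, hΔdef]
    field_simp
    norm_num
  have htmem : ∀ i, i ≤ m → t i ∈ Icc (-1:ℝ) 1 := fun i hi =>
    ⟨by rw [← ht0]; exact htmono (Nat.zero_le i), by rw [← htm]; exact htmono hi⟩
  -- choice of η
  have hGterm : ∀ i : ℕ, Tendsto (fun η : ℝ => Fst Φ (t i + η) - Fst Φ (t i))
      (𝓝[>] (0:ℝ)) (nhds 0) := by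
    intro i
    have h1 : Tendsto (fun η : ℝ => t i + η) (𝓝[>] (0:ℝ)) (𝓝[Ici (t i)] (t i)) := by
      apply tendsto_nhdsWithin_iff.mpr
      constructor
      · have h2 : Tendsto (fun η : ℝ => t i + η) (nhds 0) (nhds (t i + 0)) :=
          (continuous_const.add continuous_id).tendsto 0
        rw [add_zero] at h2
        exact h2.mono_left nhdsWithin_le_nhds
      · filter_upwards [self_mem_nhdsWithin] with η hη
        simp only [mem_Ioi] at hη
        exact le_add_of_nonneg_right hη.le
    have h2 : ContinuousWithinAt (Fst Φ) (Ici (t i)) (t i) :=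
      (FS hp ha hT hC0 hC).right_continuous (t i)
    have h3 := h2.tendsto.comp h1
    have h4 := h3.sub_const (Fst Φ (t i))
    simpa using h4
  have hGtend : Tendsto (fun η : ℝ => ∑ i ∈ Finset.range (m+1),
      (Fst Φ (t i + η) - Fst Φ (t i))) (𝓝[>] (0:ℝ)) (nhds 0) := by
    have := tendsto_finset_sum (Finset.range (m+1)) (fun i (_ : i ∈ Finset.range (m+1)) => hGterm i)
    simpa using this
  have hev1 := hGtend.eventually_lt_const hε
  have hev2 : ∀ᶠ η : ℝ in 𝓝[>] (0:ℝ), η ≤ Δ ∧ 0 < η := by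
    filter_upwards [Ioc_mem_nhdsGT_of_mem (⟨le_rfl, hΔ0⟩ : (0:ℝ) ∈ Ico (0:ℝ) Δ),
      self_mem_nhdsWithin] with η h1 h2
    exact ⟨h1.2, h2⟩
  obtain ⟨η, hηε, hηΔ, hη0⟩ := (hev1.and hev2).exists
  have hti : ∀ i : ℕ, t i < t i + η := fun i => by linarith
  set χ : ℕ → ℝ → ℝ := fun i => chi (t i) (t i + η) with hχdef
  set e : ℕ → ℝ := fun i => Fst Φ (t i + η) - Fst Φ (t i) with hedef
  have he0 : ∀ i, 0 ≤ e i := fun i => sub_nonneg.mpr (Fst_mono hp ha hT (by linarith))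
  have heε : ∑ i ∈ Finset.range (m+1), e i ≤ ε := le_of_lt hηε
  have hΦχ : ∀ i : ℕ, Fst Φ (t i) ≤ Φ (χ i) ∧ Φ (χ i) ≤ Fst Φ (t i + η) := fun i =>
    ⟨Fst_le_Phi hp ha hT (hti i), Phi_le_Fst hp ha hT (hti i)⟩
  set gs : ℝ → ℝ := fun x => ∑ j ∈ Finset.range m, g (t (j+1)) * (χ (j+1) x - χ j x) with hgsdef
  have hwnn : ∀ (j : ℕ) (x : ℝ), 0 ≤ χ (j+1) x - χ j x := by
    intro j x
    apply sub_nonneg.mpr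
    exact chi_mono (htmono (Nat.le_succ j)) (by linarith [htstep j, hΔ0]) (hti j) (hti (j+1)) x
  -- Claim A
  have hA : ∀ x ∈ Icc (0:ℝ) 1, |g x - gs x| ≤ ε := by
    intro x hx
    have hχm : χ m x = 1 := chi_eq_one (hti m) (by rw [htm]; exact hx.2)
    have hχ0 : χ 0 x = 0 := chi_eq_zero (hti 0) (by rw [ht0]; linarith [hx.1])
    have hsum1 : ∑ j ∈ Finset.range m, (χ (j+1) x - χ j x) = 1 := by
      rw [Finset.sum_range_sub (fun j => χ j x) m, hχm, hχ0, sub_zero]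
    have hterm : ∀ j ∈ Finset.range m,
        |(g x - g (t (j+1))) * (χ (j+1) x - χ j x)| ≤ ε * (χ (j+1) x - χ j x) := by
      intro j hj
      rcases eq_or_lt_of_le (hwnn j x) with h0 | hpos
      · rw [← h0, mul_zero, mul_zero, abs_zero]
      · have hx1 : t j < x := by
          by_contra hcon
          push_neg at hcon
          have h1 : χ j x = 1 := chi_eq_one (hti j) hcon
          have h2 : χ (j+1) x ≤ 1 := chi_le_one _ _ _
          rw [h1] at hpos
          linarith
        have hx2 : x ≤ t (j+1) + η := by
          by_contra hcon
          push_neg at hcon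
          have h1 : χ (j+1) x = 0 := chi_eq_zero (hti (j+1)) hcon.le
          have h2 : 0 ≤ χ j x := chi_nonneg _ _ _
          rw [h1] at hpos
          linarith
        have hstep := htstep j
        have hdist : dist x (t (j+1)) < δ := by
          rw [Real.dist_eq, abs_sub_lt_iff]
          constructor
          · linarith
          · linarith
        have hjm : j + 1 ≤ m := Finset.mem_range.mp hj
        have hmt := htmem (j+1) hjm
        have hgd : |g x - g (t (j+1))| ≤ ε := by
          have := hδ x ⟨by linarith [hx.1], by linarith [hx.2]⟩ (t (j+1))
            ⟨by linarith [hmt.1], by linarith [hmt.2]⟩ hdist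
          rw [Real.dist_eq] at this
          exact this.le
        rw [abs_mul, abs_of_nonneg (hwnn j x)]
        exact mul_le_mul_of_nonneg_right hgd (hwnn j x)
    have hrepr : g x - gs x
        = ∑ j ∈ Finset.range m, (g x - g (t (j+1))) * (χ (j+1) x - χ j x) := by
      simp only [sub_mul, Finset.sum_sub_distrib, hgsdef]
      rw [← Finset.mul_sum, hsum1, mul_one]
    rw [hrepr]
    calc |∑ j ∈ Finset.range m, (g x - g (t (j+1))) * (χ (j+1) x - χ j x)|
        ≤ ∑ j ∈ Finset.range m, |(g x - g (t (j+1))) * (χ (j+1) x - χ j x)| :=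
          Finset.abs_sum_le_sum_abs _ _
      _ ≤ ∑ j ∈ Finset.range m, ε * (χ (j+1) x - χ j x) := Finset.sum_le_sum hterm
      _ = ε * ∑ j ∈ Finset.range m, (χ (j+1) x - χ j x) := by rw [Finset.mul_sum]
      _ = ε := by rw [hsum1, mul_one]
  -- A and its limit
  set A : ℝ := ∑ j ∈ Finset.range m, g (t (j+1)) * (Φ (χ (j+1)) - Φ (χ j)) with hAdef
  have hSgs : ∀ n, S p a n gs
      = ∑ j ∈ Finset.range m, g (t (j+1)) * (S p a n (χ (j+1)) - S p a n (χ j)) := by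
    intro n
    rw [hgsdef, S_sum]
    apply Finset.sum_congr rfl
    intro j _
    rw [S_smul, S_sub]
  have hTgs : Tendsto (fun n => S p a n gs) atTop (nhds A) := by
    simp only [hSgs, hAdef]
    apply tendsto_finset_sum
    intro j _
    exact ((hT _ (chi_continuous _ _).continuousOn).sub
      (hT _ (chi_continuous _ _).continuousOn)).const_mul _
  have hΦgA : |Φ g - A| ≤ ε * C := by
    have hdiff : ∀ n, |S p a n g - S p a n gs| ≤ ε * C := by
      intro n
      rw [← S_sub]
      refine (S_abs_le hp ha hA n).trans ?_
      exact mul_le_mul_of_nonneg_left (hC n) hε.le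
    have h1 : Tendsto (fun n => |S p a n g - S p a n gs|) atTop (nhds |Φ g - A|) :=
      ((hT g hg.continuousOn).sub hTgs).abs
    exact le_of_tendsto h1 (Eventually.of_forall hdiff)
  -- B and claim C
  set B : ℝ := ∑ j ∈ Finset.range m, g (t (j+1)) * (Fst Φ (t (j+1)) - Fst Φ (t j)) with hBdef
  have hAB : |A - B| ≤ 2 * M * ε := by
    rw [hAdef, hBdef, ← Finset.sum_sub_distrib]
    refine (Finset.abs_sum_le_sum_abs _ _).trans ?_
    have hterm : ∀ j ∈ Finset.range m,
        |g (t (j+1)) * (Φ (χ (j+1)) - Φ (χ j))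
          - g (t (j+1)) * (Fst Φ (t (j+1)) - Fst Φ (t j))| ≤ M * (e (j+1) + e j) := by
      intro j _
      rw [← mul_sub, abs_mul]
      have hb1 := hΦχ (j+1)
      have hb2 := hΦχ j
      have h1 : |Φ (χ (j+1)) - Φ (χ j) - (Fst Φ (t (j+1)) - Fst Φ (t j))| ≤ e (j+1) + e j := by
        rw [hedef]
        rw [abs_le]
        constructor
        · simp only
          linarith [hb1.1, hb2.2]
        · simp only
          linarith [hb1.2, hb2.1]
      exact mul_le_mul (hM _) h1 (abs_nonneg _) hM0
    refine (Finset.sum_le_sum hterm).trans ?_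
    have hs1 : ∑ j ∈ Finset.range m, e (j+1) ≤ ∑ i ∈ Finset.range (m+1), e i := by
      calc ∑ j ∈ Finset.range m, e (j+1) ≤ ∑ j ∈ Finset.range m, e (j+1) + e 0 :=
            le_add_of_nonneg_right (he0 0)
        _ = ∑ i ∈ Finset.range (m+1), e i := (Finset.sum_range_succ' e m).symm
    have hs2 : ∑ j ∈ Finset.range m, e j ≤ ∑ i ∈ Finset.range (m+1), e i := by
      rw [Finset.sum_range_succ e m]
      exact le_add_of_nonneg_right (he0 m)
    rw [← Finset.mul_sum, Finset.sum_add_distrib]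
    calc M * (∑ j ∈ Finset.range m, e (j+1) + ∑ j ∈ Finset.range m, e j)
        ≤ M * (ε + ε) := mul_le_mul_of_nonneg_left (by linarith) hM0
      _ = 2 * M * ε := by ring
  -- Claim D
  have hμIoc : ∀ (α β : ℝ), μ (Ioc α β) = ENNReal.ofReal (Fst Φ β - Fst Φ α) := by
    intro α β
    rw [hμdef]
    exact (FS hp ha hT hC0 hC).measure_Ioc α β
  have hrestr : μ.restrict (Ioc (-1:ℝ) 1) = μ := by
    apply Measure.restrict_eq_self_of_ae_mem
    have hcompl : μ (Ioc (-1:ℝ) 1)ᶜ = 0 := by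
      have hsub : (Ioc (-1:ℝ) 1)ᶜ ⊆ (Icc (0:ℝ) 1)ᶜ :=
        compl_subset_compl.mpr (fun x hx => ⟨by linarith [hx.1], hx.2⟩)
      exact measure_mono_null hsub (FS_measure_compl hp ha hT hC0 hC)
    rw [Filter.eventually_iff, Set.setOf_mem_eq]
    exact mem_ae_iff.mpr hcompl
  have hdisj : (↑(Finset.range m) : Set ℕ).Pairwise
      (Function.onFun Disjoint (fun j => Ioc (t j) (t (j+1)))) := by
    intro i _ j _ hij
    apply Set.Ioc_disjoint_Ioc.mpr
    rcases Nat.lt_or_ge i j with h | h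
    · exact le_trans (min_le_left _ _) (le_trans (htmono h) (le_max_right _ _))
    · have h' : j < i := lt_of_le_of_ne h (Ne.symm hij)
      exact le_trans (min_le_right _ _) (le_trans (htmono h') (le_max_left _ _))
  have hsplit : ∫ x, g x ∂μ = ∑ j ∈ Finset.range m, ∫ x in Ioc (t j) (t (j+1)), g x ∂μ := by
    conv_lhs => rw [← hrestr]
    have hIoc : Ioc (-1:ℝ) 1 = ⋃ j ∈ Finset.range m, Ioc (t j) (t (j+1)) := by
      rw [Ioc_biUnion t (fun i => (htmono (Nat.le_succ i))) m, ht0, htm]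
    rw [show ∫ x in Ioc (-1:ℝ) 1, g x ∂μ = ∫ x in ⋃ j ∈ Finset.range m,
      Ioc (t j) (t (j+1)), g x ∂μ by rw [← hIoc]]
    exact integral_biUnion_finset (Finset.range m) (fun i _ => measurableSet_Ioc) hdisj
      (fun i _ => hgint.integrableOn)
  have hperpiece : ∀ j ∈ Finset.range m,
      |∫ x in Ioc (t j) (t (j+1)), g x ∂μ
        - g (t (j+1)) * (Fst Φ (t (j+1)) - Fst Φ (t j))|
      ≤ ε * (Fst Φ (t (j+1)) - Fst Φ (t j)) := by
    intro j hj
    have hμs : μ (Ioc (t j) (t (j+1))) < ⊤ := measure_lt_top μ _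
    have htoReal : (μ (Ioc (t j) (t (j+1)))).toReal = Fst Φ (t (j+1)) - Fst Φ (t j) := by
      rw [hμIoc]
      exact ENNReal.toReal_ofReal (sub_nonneg.mpr (Fst_mono hp ha hT (htmono (Nat.le_succ j))))
    have hconst : g (t (j+1)) * (Fst Φ (t (j+1)) - Fst Φ (t j))
        = ∫ _x in Ioc (t j) (t (j+1)), g (t (j+1)) ∂μ := by
      rw [setIntegral_const, smul_eq_mul, measureReal_def, htoReal, mul_comm]
    rw [hconst, ← integral_sub hgint.integrableOn (integrable_const _).integrableOn]
    have hbound : ∀ x ∈ Ioc (t j) (t (j+1)), ‖g x - g (t (j+1))‖ ≤ ε := by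
      intro x hx
      have hjm : j + 1 ≤ m := Finset.mem_range.mp hj
      have hmt := htmem (j+1) hjm
      have hmt' := htmem j (le_trans (Nat.le_succ j) hjm)
      have hstep := htstep j
      have hdist : dist x (t (j+1)) < δ := by
        rw [Real.dist_eq, abs_sub_lt_iff]
        constructor
        · linarith [hx.2]
        · linarith [hx.1]
      have := hδ x ⟨by linarith [hx.1, hmt'.1], by linarith [hx.2, hmt.2]⟩ (t (j+1))
        ⟨by linarith [hmt.1], by linarith [hmt.2]⟩ hdist
      rw [Real.dist_eq] at this
      rw [Real.norm_eq_abs]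
      exact this.le
    have hnorm := norm_setIntegral_le_of_norm_le_const hμs hbound
    rw [Real.norm_eq_abs, measureReal_def, htoReal] at hnorm
    exact hnorm
  have hDB : |∫ x, g x ∂μ - B| ≤ ε * C := by
    rw [hsplit, hBdef, ← Finset.sum_sub_distrib]
    refine (Finset.abs_sum_le_sum_abs _ _).trans ?_
    refine (Finset.sum_le_sum hperpiece).trans ?_
    rw [← Finset.mul_sum, Finset.sum_range_sub (fun j => Fst Φ (t j)) m]
    have h1 : Fst Φ (t m) = Φ (fun _ => (1:ℝ)) := by rw [htm]; exact Fst_eq_c hp ha hT le_rfl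
    have h2 : Fst Φ (t 0) = 0 := by rw [ht0]; exact Fst_eq_zero hp ha hT (by norm_num)
    rw [h1, h2, sub_zero]
    exact mul_le_mul_of_nonneg_left hcC hε.le
  -- combine
  have hfinal : |Φ g - ∫ x, g x ∂μ| ≤ |Φ g - A| + |A - B| + |∫ x, g x ∂μ - B| := by
    have h1 := abs_sub_le (Φ g) A (∫ x, g x ∂μ)
    have h2 := abs_sub_le A B (∫ x, g x ∂μ)
    have h3 : |B - ∫ x, g x ∂μ| = |∫ x, g x ∂μ - B| := abs_sub_comm _ _
    linarith
  refine hfinal.trans ?_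
  have : |Φ g - A| + |A - B| + |∫ x, g x ∂μ - B| ≤ ε * C + 2 * M * ε + ε * C := by
    linarith
  refine this.trans ?_
  nlinarith [hε.le, hC0, hM0]

end Core

section Wrap

variable {p : ℕ → ℕ → ℝ} {a : ℕ → ℝ} {C : ℝ} {Φ : (ℝ → ℝ) → ℝ}
variable (hp : ∀ n k, 0 ≤ p n k) (ha : ∀ n, 0 < a n)
    (hT : ∀ f : ℝ → ℝ, ContinuousOn f (Icc 0 1) →
      Tendsto (fun n => S p a n f) atTop (nhds (Φ f)))
    (hC0 : 0 ≤ C) (hC : ∀ n, S p a n (fun _ => (1:ℝ)) ≤ C)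

lemma tendsto_S_integral {f : ℝ → ℝ} (hf : ContinuousOn f (Icc 0 1)) :
    Tendsto (fun n => S p a n f) atTop
      (nhds (∫ x in Icc (0:ℝ) 1, f x ∂(FS hp ha hT hC0 hC).measure)) := by
  set μ := (FS hp ha hT hC0 hC).measure with hμdef
  haveI : IsFiniteMeasure μ := ⟨FS_measure_fin hp ha hT hC0 hC⟩
  set g : ℝ → ℝ := IccExtend zero_le_one ((Icc (0:ℝ) 1).restrict f) with hgdef
  have hgc : Continuous g :=
    continuous_IccExtend_iff.mpr (continuousOn_iff_continuous_restrict.mp hf)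
  have hgeq : ∀ x ∈ Icc (0:ℝ) 1, g x = f x := by
    intro x hx
    rw [hgdef, IccExtend_of_mem _ _ hx]
    rfl
  obtain ⟨M₀, hM₀⟩ := isCompact_Icc.exists_bound_of_continuousOn hf
  have hgM : ∀ x, |g x| ≤ max M₀ 0 := by
    intro x
    have h1 : g x = f ((projIcc 0 1 zero_le_one x) : ℝ) := rfl
    rw [h1]
    have hmem := (projIcc 0 1 zero_le_one x).2
    exact le_trans (by simpa [Real.norm_eq_abs] using hM₀ _ hmem) (le_max_left _ _)
  have h1 : ∀ n, S p a n f = S p a n g := fun n => S_congr (fun x hx => (hgeq x hx).symm) n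
  have h2 := Phi_eq_integral hp ha hT hC0 hC hgc (le_max_right M₀ 0) hgM
  have h3 : Tendsto (fun n => S p a n g) atTop (nhds (Φ g)) := hT g hgc.continuousOn
  rw [h2] at h3
  have hres : μ.restrict (Icc (0:ℝ) 1) = μ := by
    apply Measure.restrict_eq_self_of_ae_mem
    rw [Filter.eventually_iff, Set.setOf_mem_eq]
    exact mem_ae_iff.mpr (FS_measure_compl hp ha hT hC0 hC)
  have h4 : ∫ x, g x ∂μ = ∫ x in Icc (0:ℝ) 1, f x ∂μ := by
    rw [show ∫ x in Icc (0:ℝ) 1, f x ∂μ = ∫ x in Icc (0:ℝ) 1, g x ∂μ from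
      setIntegral_congr_fun measurableSet_Icc (fun x hx => (hgeq x hx).symm)]
    rw [hres]
  rw [h4] at h3
  simp only [h1]
  exact h3

end Wrap

lemma lamBr_natCast (mm : ℕ) (x : ℝ) :
    lamBr (mm : ℝ) x = ∑ i ∈ Finset.range mm, x ^ i := by
  by_cases hx : x = 1
  · subst hx
    simp [lamBr]
  · rw [lamBr, if_neg hx, Real.rpow_natCast, geom_sum_eq hx]
    have h1 : x - 1 ≠ 0 := sub_ne_zero.mpr hx
    have h2 : (1:ℝ) - x ≠ 0 := sub_ne_zero.mpr (Ne.symm hx)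
    field_simp
    ring

lemma lamBr_continuousOn {lam : ℝ} (hlam : 0 < lam) :
    ContinuousOn (lamBr lam) (Icc 0 1) := by
  intro x hx
  rcases eq_or_lt_of_le hx.2 with hx1 | hx1
  · -- x = 1
    have hx1' : x = 1 := hx1
    subst hx1'
    rw [← continuousWithinAt_diff_self]
    have hder : HasDerivAt (fun y : ℝ => y ^ lam) (lam * (1:ℝ) ^ (lam - 1)) 1 :=
      Real.hasDerivAt_rpow_const (Or.inl one_ne_zero)
    rw [Real.one_rpow, mul_one] at hder
    have hslope := hasDerivAt_iff_tendsto_slope.mp hder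
    have hmono : Icc (0:ℝ) 1 \ {1} ⊆ {(1:ℝ)}ᶜ := fun y hy => hy.2
    have htend : Tendsto (lamBr lam) (nhdsWithin 1 (Icc (0:ℝ) 1 \ {1})) (nhds lam) := by
      apply Tendsto.congr' _ (hslope.mono_left (nhdsWithin_mono 1 hmono))
      filter_upwards [self_mem_nhdsWithin] with y hy
      have hyne : y ≠ 1 := hy.2
      rw [slope_def_field, lamBr, if_neg hyne, Real.one_rpow]
      rw [div_eq_div_iff (sub_ne_zero.mpr hyne) (sub_ne_zero.mpr (Ne.symm hyne))]
      ring
    have hval : lamBr lam 1 = lam := by rw [lamBr, if_pos rfl]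
    rw [ContinuousWithinAt, hval]
    exact htend
  · -- x < 1
    have hxne : x ≠ 1 := ne_of_lt hx1
    have hc1 : ContinuousWithinAt (fun y : ℝ => (1 - y ^ lam)/(1 - y)) (Icc 0 1) x := by
      apply ContinuousWithinAt.div
      · exact continuousWithinAt_const.sub
          ((Real.continuousAt_rpow_const x lam (Or.inr hlam.le)).continuousWithinAt)
      · exact (continuous_const.sub continuous_id).continuousWithinAt
      · exact sub_ne_zero.mpr (Ne.symm hxne)
    have hev : ∀ᶠ y in nhdsWithin x (Icc (0:ℝ) 1), lamBr lam y = (1 - y ^ lam)/(1 - y) := by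
      have hopen : {(1:ℝ)}ᶜ ∈ nhdsWithin x (Icc (0:ℝ) 1) :=
        mem_nhdsWithin_of_mem_nhds (isOpen_compl_singleton.mem_nhds hxne)
      filter_upwards [hopen] with y hy
      rw [lamBr, if_neg (by simpa using hy)]
    apply ContinuousWithinAt.congr_of_eventuallyEq hc1 hev
    rw [lamBr, if_neg hxne]

lemma measure_ext_of_lamBr (ν₁ ν₂ : Measure ℝ) (h1fin : ν₁ univ < ⊤) (h2fin : ν₂ univ < ⊤)
    (h1c : ν₁ (Icc (0:ℝ) 1)ᶜ = 0) (h2c : ν₂ (Icc (0:ℝ) 1)ᶜ = 0)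
    (heq : ∀ lam > (0:ℝ),
      ∫ x in Icc (0:ℝ) 1, lamBr lam x ∂ν₁ = ∫ x in Icc (0:ℝ) 1, lamBr lam x ∂ν₂) :
    ν₁ = ν₂ := by
  haveI : IsFiniteMeasure ν₁ := ⟨h1fin⟩
  haveI : IsFiniteMeasure ν₂ := ⟨h2fin⟩
  have hres : ∀ (ν : Measure ℝ), ν (Icc (0:ℝ) 1)ᶜ = 0 → ν.restrict (Icc (0:ℝ) 1) = ν := by
    intro ν hν
    apply Measure.restrict_eq_self_of_ae_mem
    rw [Filter.eventually_iff, Set.setOf_mem_eq]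
    exact mem_ae_iff.mpr hν
  have hint : ∀ (ν : Measure ℝ) [IsFiniteMeasure ν] (f : ℝ → ℝ), ContinuousOn f (Icc 0 1) →
      IntegrableOn f (Icc (0:ℝ) 1) ν := by
    intro ν _ f hf
    exact hf.integrableOn_compact isCompact_Icc
  have hmom : ∀ j : ℕ, ∫ x in Icc (0:ℝ) 1, x ^ j ∂ν₁ = ∫ x in Icc (0:ℝ) 1, x ^ j ∂ν₂ := by
    have hsums : ∀ mm : ℕ, ∑ i ∈ Finset.range mm, ∫ x in Icc (0:ℝ) 1, x ^ i ∂ν₁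
        = ∑ i ∈ Finset.range mm, ∫ x in Icc (0:ℝ) 1, x ^ i ∂ν₂ := by
      intro mm
      rcases Nat.eq_zero_or_pos mm with h0 | hpos
      · subst h0; simp
      · have hlam := heq (mm : ℝ) (by exact_mod_cast hpos)
        have h1 : ∀ (ν : Measure ℝ) [IsFiniteMeasure ν], ν (Icc (0:ℝ) 1)ᶜ = 0 →
            ∫ x in Icc (0:ℝ) 1, lamBr (mm:ℝ) x ∂ν
            = ∑ i ∈ Finset.range mm, ∫ x in Icc (0:ℝ) 1, x ^ i ∂ν := by
          intro ν _ _
          rw [setIntegral_congr_fun measurableSet_Icc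
            (fun x (_ : x ∈ Icc (0:ℝ) 1) => lamBr_natCast mm x)]
          exact integral_finset_sum _ (fun i _ => hint ν _ (continuous_pow i).continuousOn)
        rw [h1 ν₁ h1c, h1 ν₂ h2c] at hlam
        exact hlam
    intro j
    have e1 := hsums (j+1)
    have e2 := hsums j
    rw [Finset.sum_range_succ, Finset.sum_range_succ] at e1
    linarith
  have hpoly : ∀ Q : Polynomial ℝ,
      ∫ x in Icc (0:ℝ) 1, Q.eval x ∂ν₁ = ∫ x in Icc (0:ℝ) 1, Q.eval x ∂ν₂ := by
    intro Q
    have h1 : ∀ (ν : Measure ℝ) [IsFiniteMeasure ν], ∫ x in Icc (0:ℝ) 1, Q.eval x ∂ν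
        = ∑ i ∈ Finset.range (Q.natDegree+1), Q.coeff i * ∫ x in Icc (0:ℝ) 1, x ^ i ∂ν := by
      intro ν _
      rw [setIntegral_congr_fun measurableSet_Icc
        (fun x (_ : x ∈ Icc (0:ℝ) 1) => Polynomial.eval_eq_sum_range x)]
      rw [integral_finset_sum _
        (fun i _ => ((hint ν _ (continuous_pow i).continuousOn).const_mul _))]
      exact Finset.sum_congr rfl (fun i _ => integral_const_mul _ _)
    rw [h1 ν₁, h1 ν₂]
    exact Finset.sum_congr rfl (fun i _ => by rw [hmom i])
  have hcont : ∀ f : ℝ → ℝ, ContinuousOn f (Icc 0 1) →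
      ∫ x in Icc (0:ℝ) 1, f x ∂ν₁ = ∫ x in Icc (0:ℝ) 1, f x ∂ν₂ := by
    intro f hf
    set K : ℝ := (ν₁ (Icc (0:ℝ) 1)).toReal + (ν₂ (Icc (0:ℝ) 1)).toReal + 1 with hKdef
    have hK0 : 0 < K := by positivity
    suffices H : ∀ ε > 0,
        |∫ x in Icc (0:ℝ) 1, f x ∂ν₁ - ∫ x in Icc (0:ℝ) 1, f x ∂ν₂| ≤ K * ε by
      by_contra hne
      have hd : 0 < |∫ x in Icc (0:ℝ) 1, f x ∂ν₁ - ∫ x in Icc (0:ℝ) 1, f x ∂ν₂| :=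
        abs_pos.mpr (sub_ne_zero.mpr hne)
      have hH := H (|∫ x in Icc (0:ℝ) 1, f x ∂ν₁ - ∫ x in Icc (0:ℝ) 1, f x ∂ν₂| / (2*K))
        (by positivity)
      have heq2 : K * (|∫ x in Icc (0:ℝ) 1, f x ∂ν₁ - ∫ x in Icc (0:ℝ) 1, f x ∂ν₂| / (2*K))
          = |∫ x in Icc (0:ℝ) 1, f x ∂ν₁ - ∫ x in Icc (0:ℝ) 1, f x ∂ν₂| / 2 := by
        field_simp
      rw [heq2] at hH
      linarith
    intro ε hε
    obtain ⟨Q, hQ⟩ := exists_polynomial_near_of_continuousOn 0 1 f hf ε hε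
    have hbound : ∀ (ν : Measure ℝ) [IsFiniteMeasure ν],
        |∫ x in Icc (0:ℝ) 1, f x ∂ν - ∫ x in Icc (0:ℝ) 1, Q.eval x ∂ν|
          ≤ ε * (ν (Icc (0:ℝ) 1)).toReal := by
      intro ν _
      rw [← integral_sub (hint ν f hf) (hint ν _ Q.continuous.continuousOn)]
      have hb : ∀ x ∈ Icc (0:ℝ) 1, ‖f x - Q.eval x‖ ≤ ε := by
        intro x hx
        rw [Real.norm_eq_abs, abs_sub_comm]
        exact (hQ x hx).le
      have hmeas : AEStronglyMeasurable (fun x => f x - Q.eval x)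
          (ν.restrict (Icc (0:ℝ) 1)) :=
        ((hint ν f hf).sub (hint ν _ Q.continuous.continuousOn)).aestronglyMeasurable
      have := norm_setIntegral_le_of_norm_le_const (measure_lt_top ν _) hb
      rwa [Real.norm_eq_abs, measureReal_def] at this
    have hb1 := hbound ν₁
    have hb2 := hbound ν₂
    have hQQ := hpoly Q
    have habs : |∫ x in Icc (0:ℝ) 1, f x ∂ν₁ - ∫ x in Icc (0:ℝ) 1, f x ∂ν₂|
        ≤ |∫ x in Icc (0:ℝ) 1, f x ∂ν₁ - ∫ x in Icc (0:ℝ) 1, Q.eval x ∂ν₁|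
          + |∫ x in Icc (0:ℝ) 1, f x ∂ν₂ - ∫ x in Icc (0:ℝ) 1, Q.eval x ∂ν₂| := by
      rw [hQQ] at *
      have := abs_sub_le (∫ x in Icc (0:ℝ) 1, f x ∂ν₁) (∫ x in Icc (0:ℝ) 1, Q.eval x ∂ν₂)
        (∫ x in Icc (0:ℝ) 1, f x ∂ν₂)
      rw [abs_sub_comm (∫ x in Icc (0:ℝ) 1, Q.eval x ∂ν₂) (∫ x in Icc (0:ℝ) 1, f x ∂ν₂)] at this
      linarith
    refine habs.trans ((add_le_add hb1 hb2).trans ?_)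
    rw [hKdef]
    nlinarith [ENNReal.toReal_nonneg (a := ν₁ (Icc (0:ℝ) 1)),
      ENNReal.toReal_nonneg (a := ν₂ (Icc (0:ℝ) 1)), hε.le]
  apply ext_of_forall_lintegral_eq_of_IsFiniteMeasure
  intro f
  have hcf : Continuous fun x : ℝ => (f x : ℝ) := NNReal.continuous_coe.comp f.continuous
  obtain ⟨B, hB⟩ := f.map_bounded'
  have hfb : ∀ x : ℝ, |(f x : ℝ)| ≤ B + (f 0 : ℝ) := by
    intro x
    have h1 := hB x 0
    rw [NNReal.dist_eq] at h1
    have h1' : |(f x : ℝ) - (f 0 : ℝ)| ≤ B := h1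
    rw [abs_of_nonneg (f x).coe_nonneg]
    have h2 : (f x : ℝ) - (f 0 : ℝ) ≤ |(f x : ℝ) - (f 0 : ℝ)| := le_abs_self _
    linarith
  have hint1 : ∀ (ν : Measure ℝ) [IsFiniteMeasure ν], Integrable (fun x => (f x : ℝ)) ν := by
    intro ν _
    exact (integrable_const (B + (f 0 : ℝ))).mono' hcf.aestronglyMeasurable
      (Eventually.of_forall fun x => by simpa using hfb x)
  have hlint : ∀ (ν : Measure ℝ) [IsFiniteMeasure ν],
      ∫⁻ x, (f x : ℝ≥0∞) ∂ν = ENNReal.ofReal (∫ x, (f x : ℝ) ∂ν) := by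
    intro ν _
    rw [ofReal_integral_eq_lintegral_ofReal (hint1 ν)
      (Eventually.of_forall fun x => (f x).coe_nonneg)]
    exact lintegral_congr (fun x => (ENNReal.ofReal_coe_nnreal).symm)
  rw [hlint ν₁, hlint ν₂]
  congr 1
  have e1 : ∫ x, (f x : ℝ) ∂ν₁ = ∫ x in Icc (0:ℝ) 1, (f x : ℝ) ∂ν₁ := by rw [hres ν₁ h1c]
  have e2 : ∫ x, (f x : ℝ) ∂ν₂ = ∫ x in Icc (0:ℝ) 1, (f x : ℝ) ∂ν₂ := by rw [hres ν₂ h2c]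
  rw [e1, e2]
  exact hcont _ hcf.continuousOn

end Stmt6Aux

theorem stmt6 (p : ℕ → ℕ → ℝ) (hp : ∀ n k, 0 ≤ p n k)
    (hsum : ∀ n, ∑ k ∈ Finset.range (n+1), p n k = 1)
    (a : ℕ → ℝ) (ha : ∀ n, 0 < a n) (ψ : ℝ → ℝ)
    (hconv : ∀ lam > (0:ℝ),
      Tendsto (fun n => a n * (1 - ∑ k ∈ Finset.range (n+1), ((k:ℝ)/n) ^ lam * p n k))
        atTop (nhds (ψ lam))) :
    ∃ μ : Measure ℝ, μ Set.univ < ⊤ ∧ μ (Set.Icc (0:ℝ) 1)ᶜ = 0 ∧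
      (∀ lam > (0:ℝ), ψ lam = ∫ x in Set.Icc (0:ℝ) 1, lamBr lam x ∂μ) ∧
      (∀ f : ℝ → ℝ, ContinuousOn f (Set.Icc 0 1) →
        Tendsto (fun n => a n * ∑ k ∈ Finset.range (n+1),
            p n k * (1 - (k:ℝ)/n) * f ((k:ℝ)/n))
          atTop (nhds (∫ x in Set.Icc (0:ℝ) 1, f x ∂μ))) ∧
      (∀ μ' : Measure ℝ, μ' Set.univ < ⊤ → μ' (Set.Icc (0:ℝ) 1)ᶜ = 0 →
        (∀ lam > (0:ℝ), ψ lam = ∫ x in Set.Icc (0:ℝ) 1, lamBr lam x ∂μ') → μ' = μ) := by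
  classical
  obtain ⟨C, hC0, hC⟩ := Stmt6Aux.exists_bound (ψ := ψ) hsum hconv
  have hT : ∀ f : ℝ → ℝ, ContinuousOn f (Set.Icc 0 1) →
      Tendsto (fun n => Stmt6Aux.S p a n f) atTop (nhds (Stmt6Aux.Phi p a f)) :=
    fun f hf => Stmt6Aux.tendsto_S_Phi (ψ := ψ) hp ha hsum hconv hf
  set μ := (Stmt6Aux.FS hp ha hT hC0 hC).measure with hμdef
  have hfin : μ Set.univ < ⊤ := Stmt6Aux.FS_measure_fin hp ha hT hC0 hC
  have hcompl : μ (Set.Icc (0:ℝ) 1)ᶜ = 0 := Stmt6Aux.FS_measure_compl hp ha hT hC0 hC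
  have hweak : ∀ f : ℝ → ℝ, ContinuousOn f (Set.Icc 0 1) →
      Tendsto (fun n => Stmt6Aux.S p a n f) atTop
        (nhds (∫ x in Set.Icc (0:ℝ) 1, f x ∂μ)) :=
    fun f hf => Stmt6Aux.tendsto_S_integral hp ha hT hC0 hC hf
  have hpsi : ∀ lam > (0:ℝ), ψ lam = ∫ x in Set.Icc (0:ℝ) 1, lamBr lam x ∂μ := by
    intro lam hlam
    have h1 := hweak (lamBr lam) (Stmt6Aux.lamBr_continuousOn hlam)
    have h3 := hconv lam hlam
    have h2 : (fun n => a n * (1 - ∑ k ∈ Finset.range (n+1), ((k:ℝ)/n) ^ lam * p n k))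
        = fun n => Stmt6Aux.S p a n (lamBr lam) :=
      funext (fun n => (Stmt6Aux.S_lamBr hsum lam n).symm)
    rw [h2] at h3
    exact tendsto_nhds_unique h3 h1
  refine ⟨μ, hfin, hcompl, hpsi, ?_, ?_⟩
  · intro f hf
    exact hweak f hf
  · intro μ' h'fin h'c h'int
    apply Stmt6Aux.measure_ext_of_lamBr μ' μ h'fin hfin h'c hcompl
    intro lam hlam
    rw [← h'int lam hlam, ← hpsi lam hlam]
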